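/- Let u₀ ∈ H¹(ℝ) be real-valued with xu₀ ∈ L²(ℝ), and let φ be a normalized eigenfunction of the Lax operator L_{u₀} = D - T_{u₀} on L²₊(ℝ) with eigenvalue λ < 0. Then Wu's identities imply Im⟨X*φ, φ⟩ = -|I₊(φ)|²/(4π) = -1/(2|λ|); in particular the parameter p = -⟨X*φ,φ⟩ lies in the upper half-plane with Im p = 1/(2|λ|). -/

import Mathlib

open MeasureTheory Filter Set Topology Complex

noncomputable section

/-- Soliton parameters from Wu's identities.  Let `φ` be a normalized
eigenfunction of the Lax operator `L_{u₀}` with eigenvalue `lam < 0`, described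
on the Fourier side by `g = φ̂ ∈ H¹(0,∞)` (with derivative `g'`), trace
`Ival = I₊(φ) = φ̂(0⁺)`, and let `a = ⟨φ, Πu₀⟩`.  The inner product
`ip = ⟨X*φ, φ⟩` is expressed on the Fourier side (Plancherel) as
`ip = (1/2π) ∫₀^∞ i g'(ξ) conj(g(ξ)) dξ`.  Then Wu's identities
`|a|² = -2π lam` and `lam · I₊ = -a` imply
`Im ⟨X*φ, φ⟩ = -|I₊(φ)|²/(4π) = -1/(2|lam|)`; in particular
`p = -⟨X*φ, φ⟩` lies in the upper half-plane with `Im p = 1/(2|lam|)`. -/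
theorem soliton_parameter_in_upper_half_plane
    (g g' : ℝ → ℂ) (lam : ℝ) (hlam : lam < 0) (Ival a : ℂ)
    (hg_deriv : ∀ ξ ∈ Ioi (0 : ℝ), HasDerivAt g (g' ξ) ξ)
    (hg_L2 : MemLp g 2 (volume.restrict (Ioi (0 : ℝ))))
    (hg'_L2 : MemLp g' 2 (volume.restrict (Ioi (0 : ℝ))))
    (hnorm : (1 / (2 * Real.pi)) * ∫ ξ in Ioi (0 : ℝ), ‖g ξ‖ ^ 2 = 1)
    (htrace : Tendsto g (𝓝[>] (0 : ℝ)) (𝓝 Ival))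
    (hg_top : Tendsto g atTop (𝓝 0))
    (hint : IntegrableOn (fun ξ => g' ξ * (starRingEnd ℂ) (g ξ)) (Ioi (0 : ℝ)))
    (hWu1 : (‖a‖) ^ 2 = -(2 * Real.pi * lam))
    (hWu2 : (lam : ℂ) * Ival = -a) :
    ((1 / (2 * Real.pi) : ℂ) *
        ∫ ξ in Ioi (0 : ℝ), Complex.I * g' ξ * (starRingEnd ℂ) (g ξ)).im
        = -(‖Ival‖) ^ 2 / (4 * Real.pi) ∧
    ((1 / (2 * Real.pi) : ℂ) *
        ∫ ξ in Ioi (0 : ℝ), Complex.I * g' ξ * (starRingEnd ℂ) (g ξ)).im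
        = -(1 / (2 * |lam|)) ∧
    (-((1 / (2 * Real.pi) : ℂ) *
        ∫ ξ in Ioi (0 : ℝ), Complex.I * g' ξ * (starRingEnd ℂ) (g ξ))).im
        = 1 / (2 * |lam|) ∧
    0 < (-((1 / (2 * Real.pi) : ℂ) *
        ∫ ξ in Ioi (0 : ℝ), Complex.I * g' ξ * (starRingEnd ℂ) (g ξ))).im := by
  have hpi := Real.pi_pos
  have hlam0 : lam ≠ 0 := ne_of_lt hlam
  set J : ℂ := ∫ ξ in Ioi (0 : ℝ), g' ξ * (starRingEnd ℂ) (g ξ) with hJdef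
  -- Step 1: Re J = -‖Ival‖²/2, by the fundamental theorem of calculus on (0,∞).
  have key : J.re = -‖Ival‖ ^ 2 / 2 := by
    set H : ℝ → ℝ := fun ξ => if ξ = 0 then ‖Ival‖ ^ 2 else ‖g ξ‖ ^ 2 with hHdef
    have hH0 : H 0 = ‖Ival‖ ^ 2 := if_pos rfl
    have hHcont : ContinuousWithinAt H (Ici 0) 0 := by
      rw [ContinuousWithinAt, hH0]
      have h1 : Tendsto H (𝓝[>] (0 : ℝ)) (𝓝 (‖Ival‖ ^ 2)) := by
        have h2 : Tendsto (fun ξ => ‖g ξ‖ ^ 2) (𝓝[>] (0 : ℝ)) (𝓝 (‖Ival‖ ^ 2)) :=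
          ((htrace.norm).pow 2)
        refine h2.congr' ?_
        filter_upwards [self_mem_nhdsWithin] with x hx
        simp [hHdef, ne_of_gt (mem_Ioi.mp hx)]
      have hIci : Ici (0 : ℝ) = insert 0 (Ioi 0) := by
        ext x; simp [le_iff_lt_or_eq, or_comm, eq_comm]
      rw [hIci, nhdsWithin_insert]
      exact Tendsto.sup (by simpa [hH0] using tendsto_pure_nhds H 0) h1
    have hHderiv : ∀ ξ ∈ Ioi (0 : ℝ),
        HasDerivAt H (2 * (g' ξ * (starRingEnd ℂ) (g ξ)).re) ξ := by
      intro ξ hξ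
      have h1 : HasDerivAt (fun x => ‖g x‖ ^ 2)
          (2 * (inner ℝ (g ξ) (g' ξ) : ℝ)) ξ := (hg_deriv ξ hξ).norm_sq
      have h2 : (2 : ℝ) * (inner ℝ (g ξ) (g' ξ) : ℝ)
          = 2 * (g' ξ * (starRingEnd ℂ) (g ξ)).re := by
        simp [real_inner_eq_re_inner (𝕜 := ℂ), Complex.mul_re, Complex.conj_re,
          Complex.conj_im, RCLike.inner_apply]
      rw [h2] at h1
      refine HasDerivAt.congr_of_eventuallyEq h1 ?_
      filter_upwards [Ioi_mem_nhds (mem_Ioi.mp hξ)] with x hx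
      simp [hHdef, ne_of_gt (mem_Ioi.mp hx)]
    have hHtop : Tendsto H atTop (𝓝 (0 : ℝ)) := by
      have h2 : Tendsto (fun ξ => ‖g ξ‖ ^ 2) atTop (𝓝 (0 : ℝ)) := by
        simpa using hg_top.norm.pow 2
      refine h2.congr' ?_
      filter_upwards [Ioi_mem_atTop (0 : ℝ)] with x hx
      simp [hHdef, ne_of_gt (mem_Ioi.mp hx)]
    have hint' : IntegrableOn (fun ξ => 2 * (g' ξ * (starRingEnd ℂ) (g ξ)).re)
        (Ioi (0 : ℝ)) := (hint.re.const_mul 2)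
    have hFTC := integral_Ioi_of_hasDerivAt_of_tendsto hHcont hHderiv hint' hHtop
    rw [hH0] at hFTC
    have hre : ∫ ξ in Ioi (0 : ℝ), 2 * (g' ξ * (starRingEnd ℂ) (g ξ)).re
        = 2 * J.re := by
      rw [integral_const_mul, hJdef]
      have h4 := integral_re hint
      simp only [RCLike.re_to_complex] at h4
      rw [h4]
    rw [hre] at hFTC
    linarith
  -- Step 2: the integral with the extra `I` factor.
  have hIeq : (∫ ξ in Ioi (0 : ℝ), Complex.I * g' ξ * (starRingEnd ℂ) (g ξ))
      = Complex.I * J := by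
    rw [hJdef, ← integral_const_mul]
    congr 1; ext ξ; ring
  have hcoef : (1 / (2 * Real.pi) : ℂ) = ((1 / (2 * Real.pi) : ℝ) : ℂ) := by
    push_cast; ring
  have him : ((1 / (2 * Real.pi) : ℂ) *
      ∫ ξ in Ioi (0 : ℝ), Complex.I * g' ξ * (starRingEnd ℂ) (g ξ)).im
      = (1 / (2 * Real.pi)) * J.re := by
    rw [hIeq, hcoef]
    simp [Complex.mul_im, Complex.mul_re, Complex.I_re, Complex.I_im,
      Complex.ofReal_re, Complex.ofReal_im]
  -- Step 3: Wu's identities give ‖Ival‖² = 2π/|lam|.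
  have habsI : ‖Ival‖ ^ 2 = 2 * Real.pi / |lam| := by
    have h1 : ‖(lam : ℂ) * Ival‖ = ‖-a‖ := by rw [hWu2]
    rw [norm_mul, norm_neg, Complex.norm_real, Real.norm_eq_abs] at h1
    have h2 : (|lam| * ‖Ival‖) ^ 2 = -(2 * Real.pi * lam) := by
      rw [← hWu1, h1]
    rw [abs_of_neg hlam] at h2 ⊢
    have hl : (0 : ℝ) < -lam := by linarith
    field_simp at h2 ⊢
    nlinarith [sq_nonneg ‖Ival‖]
  have hval : ((1 / (2 * Real.pi) : ℂ) *
      ∫ ξ in Ioi (0 : ℝ), Complex.I * g' ξ * (starRingEnd ℂ) (g ξ)).im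
      = -(‖Ival‖) ^ 2 / (4 * Real.pi) := by
    rw [him, key]
    ring
  have hval2 : -(‖Ival‖) ^ 2 / (4 * Real.pi) = -(1 / (2 * |lam|)) := by
    rw [habsI]
    have hl : (0 : ℝ) < |lam| := abs_pos.mpr hlam0
    field_simp
    ring
  have hl : (0 : ℝ) < |lam| := abs_pos.mpr hlam0
  refine ⟨hval, hval.trans hval2, ?_, ?_⟩
  · rw [Complex.neg_im, hval, hval2]; ring
  · rw [Complex.neg_im, hval, hval2, neg_neg]; positivity
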